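/- Let μ > 0 and let f∞(v) = (1/μ) e^{−v/μ}. Let r : [0,∞) → ℝ be continuously differentiable with ∫₀^∞ r(v) dv = 0 and ∫₀^∞ v r(v) dv = 0, such that ∫₀^∞ |r'(v)|² / f∞(v) dv < ∞, r, v r, v² r' are integrable, and (1 + |v| + v²) |r(v)| → 0 as v → ∞. Then r(0)² ≤ (1/3) ∫₀^∞ |r'(v)|² / f∞(v) dv, i.e. r(0)² ≤ (1/3) ∫₀^∞ μ e^{v/μ} |r'(v)|² dv. -/

import Mathlib

open MeasureTheory Set Filter


lemma myMomentInt (μ : ℝ) (hμ : 0 < μ) (k : ℕ) :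
    IntegrableOn (fun v : ℝ => v ^ k * Real.exp (-(v / μ))) (Ioi 0) := by
  have h := integrableOn_rpow_mul_exp_neg_mul_rpow (p := 1) (s := (k : ℝ)) (b := 1/μ)
    (neg_one_lt_zero.trans_le (Nat.cast_nonneg k)) one_pos (by positivity)
  refine h.congr_fun (fun x hx => ?_) measurableSet_Ioi
  have h1 : -(1/μ) * x ^ (1:ℝ) = -(x/μ) := by rw [Real.rpow_one]; ring
  beta_reduce
  rw [h1, Real.rpow_natCast]

lemma myMomentVal (μ : ℝ) (hμ : 0 < μ) (k : ℕ) :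
    ∫ v in Ioi (0:ℝ), v ^ k * Real.exp (-(v / μ)) = (Nat.factorial k : ℝ) * μ ^ (k + 1) := by
  have h := Real.integral_rpow_mul_exp_neg_mul_Ioi (a := (k : ℝ) + 1) (r := 1/μ)
    (by positivity) (by positivity)
  rw [show ∫ t in Ioi (0:ℝ), t ^ ((k:ℝ) + 1 - 1) * Real.exp (-(1/μ * t))
      = ∫ v in Ioi (0:ℝ), v ^ k * Real.exp (-(v / μ)) from ?_ ] at h
  · rw [h, one_div_one_div, Real.Gamma_nat_eq_factorial,
      show (k:ℝ) + 1 = ((k+1 : ℕ) : ℝ) by push_cast; ring, Real.rpow_natCast]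
    ring
  · refine setIntegral_congr_fun measurableSet_Ioi (fun x hx => ?_)
    have h1 : -(1/μ * x) = -(x/μ) := by ring
    rw [show (k:ℝ) + 1 - 1 = (k:ℝ) by ring, Real.rpow_natCast, h1]

lemma myCS (f g : ℝ → ℝ) (hf : IntegrableOn (fun x => f x ^ 2) (Ioi 0))
    (hg : IntegrableOn (fun x => g x ^ 2) (Ioi 0))
    (hfg : IntegrableOn (fun x => f x * g x) (Ioi 0)) :
    (∫ x in Ioi (0:ℝ), f x * g x) ^ 2 ≤
      (∫ x in Ioi (0:ℝ), f x ^ 2) * ∫ x in Ioi (0:ℝ), g x ^ 2 := by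
  set A := ∫ x in Ioi (0:ℝ), f x ^ 2
  set B := ∫ x in Ioi (0:ℝ), f x * g x
  set C := ∫ x in Ioi (0:ℝ), g x ^ 2
  have key : ∀ t : ℝ, 0 ≤ A * (t * t) + (2 * B) * t + C := by
    intro t
    have h0 : 0 ≤ ∫ x in Ioi (0:ℝ), (t * f x + g x) ^ 2 :=
      setIntegral_nonneg measurableSet_Ioi (fun x _ => sq_nonneg _)
    have h1 : (fun x => (t * f x + g x) ^ 2)
        = fun x => t ^ 2 * f x ^ 2 + ((2 * t) * (f x * g x) + g x ^ 2) := by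
      funext x; ring
    have i1 : IntegrableOn (fun x => 2 * t * (f x * g x) + g x ^ 2) (Ioi 0) :=
      (hfg.const_mul _).add hg
    rw [h1, integral_add (hf.const_mul _) i1,
      integral_add (hfg.const_mul _) hg, integral_const_mul, integral_const_mul] at h0
    nlinarith [h0]
  have hd := discrim_le_zero key
  rw [discrim] at hd
  nlinarith [hd]

/-- **Boundary-value estimate (Lemma L1).**
Let `μ > 0` and `f∞(v) = (1/μ) e^{−v/μ}`. If `r : [0,∞) → ℝ` is continuously
differentiable with `∫₀^∞ r(v) dv = 0` and `∫₀^∞ v r(v) dv = 0`, with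
`∫₀^∞ |r'(v)|²/f∞(v) dv < ∞`, `r`, `v r`, `v² r'` integrable, and
`(1 + |v| + v²)|r(v)| → 0` as `v → ∞`, then
`r(0)² ≤ (1/3) ∫₀^∞ |r'(v)|²/f∞(v) dv = (1/3) ∫₀^∞ μ e^{v/μ} |r'(v)|² dv`. -/
theorem boundary_value_estimate
    (μ : ℝ) (hμ : 0 < μ)
    (r r' : ℝ → ℝ)
    (hderiv : ∀ v : ℝ, 0 ≤ v → HasDerivAt r (r' v) v)
    (hcont : ContinuousOn r' (Ici 0))
    (hint : IntegrableOn r (Ioi 0))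
    (hint1 : IntegrableOn (fun v => v * r v) (Ioi 0))
    (hint2 : IntegrableOn (fun v => v ^ 2 * r' v) (Ioi 0))
    (hzero : ∫ v in Ioi (0:ℝ), r v = 0)
    (hzero1 : ∫ v in Ioi (0:ℝ), v * r v = 0)
    (hweighted : IntegrableOn (fun v => μ * Real.exp (v / μ) * (r' v) ^ 2) (Ioi 0))
    (hdecay : Tendsto (fun v => (1 + |v| + v ^ 2) * |r v|) atTop (nhds 0)) :
    (r 0) ^ 2 ≤ (1 / 3) * ∫ v in Ioi (0:ℝ), μ * Real.exp (v / μ) * (r' v) ^ 2 := by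
  -- the auxiliary polynomial
  set p : ℝ → ℝ := fun v => 1 - v / μ + v ^ 2 / (6 * μ ^ 2) with hp
  -- integrability of r'
  have hr'int : IntegrableOn r' (Ioi 0) := by
    have hbd : IntegrableOn
        (fun v => (1/(2*μ)) * (μ * Real.exp (v / μ) * (r' v) ^ 2)
          + (1/2) * (1 * Real.exp (-(v / μ)))) (Ioi 0) :=
      (hweighted.const_mul _).add (((myMomentInt μ hμ 0).congr_fun
        (fun x _ => by norm_num) measurableSet_Ioi).const_mul _)
    refine Integrable.mono' hbd
      ((hcont.mono (Ioi_subset_Ici le_rfl)).aestronglyMeasurable measurableSet_Ioi) ?_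
    refine Filter.Eventually.of_forall fun v => ?_
    rw [Real.norm_eq_abs]
    have hE : Real.exp (v / μ) * Real.exp (-(v / μ)) = 1 := by
      rw [← Real.exp_add]; simp
    have hc : (1/(2*μ)) * (μ * Real.exp (v / μ) * (r' v) ^ 2)
        = (1/2) * (Real.exp (v / μ) * (r' v) ^ 2) := by
      field_simp
    rw [hc]
    set A := Real.exp (v / μ) with hA
    set B := Real.exp (-(v / μ)) with hB
    have hApos : 0 < A := Real.exp_pos _
    have hBpos : 0 < B := Real.exp_pos _
    have key : 2 * |r' v| * A ≤ A ^ 2 * (r' v) ^ 2 + 1 := by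
      nlinarith [sq_nonneg (A * |r' v| - 1), sq_abs (r' v)]
    have e1 : |r' v| = (2 * |r' v| * A) * (B / 2) := by
      rw [show (2 * |r' v| * A) * (B / 2) = |r' v| * (A * B) by ring, hE, mul_one]
    calc |r' v| = (2 * |r' v| * A) * (B / 2) := e1
      _ ≤ (A ^ 2 * (r' v) ^ 2 + 1) * (B / 2) :=
          mul_le_mul_of_nonneg_right key (by positivity)
      _ = (A * (r' v) ^ 2) * (A * B) / 2 + B / 2 := by ring
      _ = 1 / 2 * (A * (r' v) ^ 2) + 1 / 2 * (1 * B) := by rw [hE]; ring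
  -- integrability of v * r'
  have hvr'int : IntegrableOn (fun v => v * r' v) (Ioi 0) := by
    refine Integrable.mono' (hr'int.abs.add hint2.abs)
      (((continuousOn_id.mul hcont).mono (Ioi_subset_Ici le_rfl)).aestronglyMeasurable
        measurableSet_Ioi) ?_
    refine Filter.Eventually.of_forall fun v => ?_
    simp only [Pi.add_apply]
    rw [Real.norm_eq_abs, abs_mul]
    have h2 : |v ^ 2 * r' v| = v ^ 2 * |r' v| := by
      rw [abs_mul, abs_of_nonneg (sq_nonneg v)]
    rw [h2]
    nlinarith [sq_nonneg (|v| - 1), abs_nonneg (r' v), sq_abs v]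
  -- limits at infinity
  have hfac : ∀ v : ℝ, 0 ≤ (1 + |v| + v ^ 2) * |r v| :=
    fun v => mul_nonneg (by positivity) (abs_nonneg _)
  have hr0 : Tendsto r atTop (nhds 0) := by
    rw [tendsto_zero_iff_abs_tendsto_zero]
    refine squeeze_zero (fun v => abs_nonneg _) (fun v => ?_) hdecay
    simp only [Function.comp_apply]
    nlinarith [mul_nonneg (abs_nonneg v) (abs_nonneg (r v)),
      mul_nonneg (sq_nonneg v) (abs_nonneg (r v))]
  have hvr0 : Tendsto (fun v => v * r v) atTop (nhds 0) := by
    rw [tendsto_zero_iff_abs_tendsto_zero]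
    refine squeeze_zero (fun v => abs_nonneg _) (fun v => ?_) hdecay
    simp only [Function.comp_apply]
    rw [abs_mul]
    nlinarith [abs_nonneg (r v),
      mul_nonneg (sq_nonneg v) (abs_nonneg (r v))]
  have hv2r0 : Tendsto (fun v => v ^ 2 * r v) atTop (nhds 0) := by
    rw [tendsto_zero_iff_abs_tendsto_zero]
    refine squeeze_zero (fun v => abs_nonneg _) (fun v => ?_) hdecay
    simp only [Function.comp_apply]
    rw [abs_mul, abs_of_nonneg (sq_nonneg v)]
    nlinarith [abs_nonneg (r v),
      mul_nonneg (abs_nonneg v) (abs_nonneg (r v))]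
  -- FTC identities
  have key0 : ∫ v in Ioi (0:ℝ), r' v = -(r 0) := by
    rw [integral_Ioi_of_hasDerivAt_of_tendsto' (fun x hx => hderiv x hx) hr'int hr0]
    ring
  have key1 : ∫ v in Ioi (0:ℝ), v * r' v = 0 := by
    have hd : ∀ x ∈ Ici (0:ℝ), HasDerivAt (fun v => v * r v) (r x + x * r' x) x := by
      intro x hx
      have := (hasDerivAt_id' x).fun_mul (hderiv x hx)
      simpa [one_mul] using this
    have h := integral_Ioi_of_hasDerivAt_of_tendsto' hd (hint.add hvr'int) hvr0
    rw [integral_add hint hvr'int, hzero] at h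
    simpa using h
  have key2 : ∫ v in Ioi (0:ℝ), v ^ 2 * r' v = 0 := by
    have hd : ∀ x ∈ Ici (0:ℝ), HasDerivAt (fun v => v ^ 2 * r v)
        (2 * (x * r x) + x ^ 2 * r' x) x := by
      intro x hx
      have := (hasDerivAt_pow 2 x).fun_mul (hderiv x hx)
      exact this.congr_deriv (by norm_num; ring)
    have h := integral_Ioi_of_hasDerivAt_of_tendsto' hd
      ((hint1.const_mul 2).add hint2) hv2r0
    rw [integral_add (hint1.const_mul 2) hint2, integral_const_mul, hzero1] at h
    simpa using h
  -- the Cauchy–Schwarz decomposition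
  set w : ℝ → ℝ := fun v => μ * Real.exp (v / μ) with hw
  have hwpos : ∀ v : ℝ, 0 < w v := fun v => by positivity
  set F : ℝ → ℝ := fun v => Real.sqrt (w v) * r' v with hF
  set G : ℝ → ℝ := fun v => p v / Real.sqrt (w v) with hG
  have hFG : ∀ v, F v * G v = r' v * p v := by
    intro v
    have h := Real.sqrt_ne_zero'.2 (hwpos v)
    simp only [hF, hG]
    field_simp
  have hF2 : ∀ v, F v ^ 2 = μ * Real.exp (v / μ) * (r' v) ^ 2 := by
    intro v
    rw [hF, mul_pow, Real.sq_sqrt (hwpos v).le]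
  have hwinv : ∀ v : ℝ, (w v)⁻¹ = (1 / μ) * Real.exp (-(v / μ)) := by
    intro v
    rw [hw]
    rw [Real.exp_neg]
    field_simp
  have hG2 : ∀ v, G v ^ 2 = p v ^ 2 * ((1 / μ) * Real.exp (-(v / μ))) := by
    intro v
    rw [hG, div_pow, Real.sq_sqrt (hwpos v).le, div_eq_mul_inv, hwinv v]
  -- expansion of G² as polynomial times exponential
  have hG2exp : ∀ v : ℝ, G v ^ 2 =
      (1 / μ) * (v ^ 0 * Real.exp (-(v / μ)))
      + (-2 / μ ^ 2) * (v ^ 1 * Real.exp (-(v / μ)))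
      + (4 / (3 * μ ^ 3)) * (v ^ 2 * Real.exp (-(v / μ)))
      + (-1 / (3 * μ ^ 4)) * (v ^ 3 * Real.exp (-(v / μ)))
      + (1 / (36 * μ ^ 5)) * (v ^ 4 * Real.exp (-(v / μ))) := by
    intro v
    rw [hG2 v, hp]
    have hμ' : μ ≠ 0 := hμ.ne'
    field_simp
    ring
  have hG2int : IntegrableOn (fun v => G v ^ 2) (Ioi 0) := by
    have : IntegrableOn (fun v : ℝ =>
        (1 / μ) * (v ^ 0 * Real.exp (-(v / μ)))
        + (-2 / μ ^ 2) * (v ^ 1 * Real.exp (-(v / μ)))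
        + (4 / (3 * μ ^ 3)) * (v ^ 2 * Real.exp (-(v / μ)))
        + (-1 / (3 * μ ^ 4)) * (v ^ 3 * Real.exp (-(v / μ)))
        + (1 / (36 * μ ^ 5)) * (v ^ 4 * Real.exp (-(v / μ)))) (Ioi 0) :=
      (((((myMomentInt μ hμ 0).const_mul _).add ((myMomentInt μ hμ 1).const_mul _)).add
        ((myMomentInt μ hμ 2).const_mul _)).add ((myMomentInt μ hμ 3).const_mul _)).add
        ((myMomentInt μ hμ 4).const_mul _)
    exact this.congr_fun (fun x _ => (hG2exp x).symm) measurableSet_Ioi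
  have hG2val : ∫ v in Ioi (0:ℝ), G v ^ 2 = 1 / 3 := by
    have e : ∫ v in Ioi (0:ℝ), G v ^ 2 = ∫ v in Ioi (0:ℝ),
        ((1 / μ) * (v ^ 0 * Real.exp (-(v / μ)))
        + (-2 / μ ^ 2) * (v ^ 1 * Real.exp (-(v / μ)))
        + (4 / (3 * μ ^ 3)) * (v ^ 2 * Real.exp (-(v / μ)))
        + (-1 / (3 * μ ^ 4)) * (v ^ 3 * Real.exp (-(v / μ)))
        + (1 / (36 * μ ^ 5)) * (v ^ 4 * Real.exp (-(v / μ)))) :=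
      setIntegral_congr_fun measurableSet_Ioi (fun x _ => hG2exp x)
    have i0 : IntegrableOn (fun v : ℝ => (1 / μ) * (v ^ 0 * Real.exp (-(v / μ)))) (Ioi 0) :=
      (myMomentInt μ hμ 0).const_mul _
    have i1 : IntegrableOn (fun v : ℝ => (-2 / μ ^ 2) * (v ^ 1 * Real.exp (-(v / μ)))) (Ioi 0) :=
      (myMomentInt μ hμ 1).const_mul _
    have i2 : IntegrableOn (fun v : ℝ =>
        (4 / (3 * μ ^ 3)) * (v ^ 2 * Real.exp (-(v / μ)))) (Ioi 0) :=
      (myMomentInt μ hμ 2).const_mul _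
    have i3 : IntegrableOn (fun v : ℝ =>
        (-1 / (3 * μ ^ 4)) * (v ^ 3 * Real.exp (-(v / μ)))) (Ioi 0) :=
      (myMomentInt μ hμ 3).const_mul _
    have i4 : IntegrableOn (fun v : ℝ =>
        (1 / (36 * μ ^ 5)) * (v ^ 4 * Real.exp (-(v / μ)))) (Ioi 0) :=
      (myMomentInt μ hμ 4).const_mul _
    have j1 : IntegrableOn (fun v : ℝ => (1 / μ) * (v ^ 0 * Real.exp (-(v / μ)))
        + (-2 / μ ^ 2) * (v ^ 1 * Real.exp (-(v / μ)))) (Ioi 0) := i0.add i1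
    have j2 : IntegrableOn (fun v : ℝ => (1 / μ) * (v ^ 0 * Real.exp (-(v / μ)))
        + (-2 / μ ^ 2) * (v ^ 1 * Real.exp (-(v / μ)))
        + (4 / (3 * μ ^ 3)) * (v ^ 2 * Real.exp (-(v / μ)))) (Ioi 0) := j1.add i2
    have j3 : IntegrableOn (fun v : ℝ => (1 / μ) * (v ^ 0 * Real.exp (-(v / μ)))
        + (-2 / μ ^ 2) * (v ^ 1 * Real.exp (-(v / μ)))
        + (4 / (3 * μ ^ 3)) * (v ^ 2 * Real.exp (-(v / μ)))
        + (-1 / (3 * μ ^ 4)) * (v ^ 3 * Real.exp (-(v / μ)))) (Ioi 0) := j2.add i3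
    rw [e]
    rw [integral_add j3 i4, integral_add j2 i3, integral_add j1 i2, integral_add i0 i1,
      integral_const_mul, integral_const_mul, integral_const_mul, integral_const_mul,
      integral_const_mul, myMomentVal μ hμ 0, myMomentVal μ hμ 1, myMomentVal μ hμ 2,
      myMomentVal μ hμ 3, myMomentVal μ hμ 4]
    simp [Nat.factorial]
    field_simp
    ring
  -- integrability of F², F⬝G
  have hF2int : IntegrableOn (fun v => F v ^ 2) (Ioi 0) :=
    hweighted.congr_fun (fun x _ => (hF2 x).symm) measurableSet_Ioi
  have hFGint : IntegrableOn (fun v => F v * G v) (Ioi 0) := by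
    have : IntegrableOn (fun v : ℝ => r' v + ((-(1/μ)) * (v * r' v)
        + (1 / (6 * μ ^ 2)) * (v ^ 2 * r' v))) (Ioi 0) :=
      hr'int.add ((hvr'int.const_mul _).add (hint2.const_mul _))
    refine this.congr_fun (fun x _ => ?_) measurableSet_Ioi
    rw [hFG x, hp]
    have hμ' : μ ≠ 0 := hμ.ne'
    field_simp
    ring
  -- the value of ∫ F G
  have hFGval : ∫ v in Ioi (0:ℝ), F v * G v = -(r 0) := by
    have e : ∫ v in Ioi (0:ℝ), F v * G v = ∫ v in Ioi (0:ℝ),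
        (r' v + ((-(1/μ)) * (v * r' v) + (1 / (6 * μ ^ 2)) * (v ^ 2 * r' v))) := by
      refine setIntegral_congr_fun measurableSet_Ioi (fun x _ => ?_)
      rw [hFG x, hp]
      have hμ' : μ ≠ 0 := hμ.ne'
      field_simp
      ring
    have k1 : IntegrableOn (fun v : ℝ => (-(1/μ)) * (v * r' v)
        + (1 / (6 * μ ^ 2)) * (v ^ 2 * r' v)) (Ioi 0) :=
      (hvr'int.const_mul _).add (hint2.const_mul _)
    rw [e, integral_add hr'int k1,
      integral_add (hvr'int.const_mul _) (hint2.const_mul _),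
      integral_const_mul, integral_const_mul, key0, key1, key2]
    ring
  -- conclude by Cauchy–Schwarz
  have hcs := myCS F G hF2int hG2int hFGint
  rw [hFGval, hG2val] at hcs
  have hAval : ∫ v in Ioi (0:ℝ), F v ^ 2
      = ∫ v in Ioi (0:ℝ), μ * Real.exp (v / μ) * (r' v) ^ 2 :=
    setIntegral_congr_fun measurableSet_Ioi (fun x _ => hF2 x)
  rw [hAval] at hcs
  nlinarith [hcs]
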